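/- If W^T X = Y + ΔY and W Y = X + ΔX, and the total error ξ := W^T ΔX + ΔY satisfies ξ = 0, and Y has full row rank (i.e., Y Y^T is invertible), then W^T W = I, i.e., the columns of W are orthonormal. -/
import Mathlib


open Matrix

theorem stmt_1 (d d' N : ℕ)
    (W : Matrix (Fin d) (Fin d') ℝ)
    (X ΔX : Matrix (Fin d) (Fin N) ℝ)
    (Y ΔY : Matrix (Fin d') (Fin N) ℝ)
    (h1 : Wᵀ * X = Y + ΔY) (h2 : W * Y = X + ΔX)
    (hξ : Wᵀ * ΔX + ΔY = 0)
    (hY : IsUnit (Y * Yᵀ)) :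
    Wᵀ * W = 1 := by
  have key : Wᵀ * W * Y = Y := by
    have : Wᵀ * (W * Y) = Wᵀ * X + Wᵀ * ΔX := by rw [h2, Matrix.mul_add]
    rw [h1] at this
    rw [Matrix.mul_assoc, this]
    rw [add_assoc, add_comm ΔY, hξ, add_zero]
  have h3 : Wᵀ * W * (Y * Yᵀ) = 1 * (Y * Yᵀ) := by
    rw [← Matrix.mul_assoc, key, Matrix.one_mul]
  exact hY.mul_right_cancel h3
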